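/- Compatibility of synthesis with marginals on localization spaces: let A ⊆ [n] with |A| ≥ 2, B ∈ P̄(A), F ∈ H_B, and A' ⊆ A with |A'| ≥ 2. If B ⊆ A' then M_{A'}(φ_A F) = φ_{A'} F, and if B ⊄ A' then M_{A'}(φ_A F) = 0. Moreover, if B ≠ ∅ then M_∅(φ_A F) = 0. -/

import Mathlib

open Finset
open scoped List

abbrev Word (n : ℕ) := List (Fin n)

/-- `Γ(A)`: duplicate-free words whose set of letters is exactly `A`. -/
noncomputable def rankings (n : ℕ) (A : Finset (Fin n)) : Finset (Word n) :=
  A.toList.permutations.toFinset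

/-- All duplicate-free words on `[n]`. -/
noncomputable def allWords (n : ℕ) : Finset (Word n) :=
  Finset.univ.biUnion fun A : Finset (Fin n) => rankings n A

def IsRanking {n : ℕ} (A : Finset (Fin n)) (w : Word n) : Prop :=
  w.Nodup ∧ w.toFinset = A

instance {n : ℕ} (A : Finset (Fin n)) (w : Word n) : Decidable (IsRanking A w) :=
  inferInstanceAs (Decidable (w.Nodup ∧ w.toFinset = A))

/-- Membership in `L(Γ(A))`: functions supported on `Γ(A)`. -/
def MemL {n : ℕ} (A : Finset (Fin n)) (F : Word n → ℝ) : Prop :=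
  ∀ w, F w ≠ 0 → IsRanking A w

/-- Marginal operator `M_B` (with the convention `M_∅ F = (Σ F)·δ_0̄`). -/
noncomputable def marg {n : ℕ} (B : Finset (Fin n)) (F : Word n → ℝ) : Word n → ℝ :=
  fun π => if IsRanking B π then ∑ σ ∈ allWords n, (if π <+ σ then F σ else 0) else 0

/-- Membership in the localization space `H_B` (for `B = ∅` this is `L(Γ(∅)) = ℝ·δ_0̄`). -/
def MemH {n : ℕ} (B : Finset (Fin n)) (F : Word n → ℝ) : Prop :=
  MemL B F ∧
    (∀ B' : Finset (Fin n), B' ⊂ B → 2 ≤ B'.card → marg B' F = 0) ∧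
    (2 ≤ B.card → ∑ π ∈ rankings n B, F π = 0)

/-- `P̄(A) = {B ⊆ A : |B| ≥ 2} ∪ {∅}`. -/
def Pbar {n : ℕ} (A : Finset (Fin n)) : Finset (Finset (Fin n)) :=
  A.powerset.filter fun B => 2 ≤ B.card ∨ B = ∅

/-- Synthesis operator `φ_A`. -/
noncomputable def synth {n : ℕ} (A : Finset (Fin n)) (F : Word n → ℝ) : Word n → ℝ :=
  fun σ =>
    if IsRanking A σ then
      F [] / (Nat.factorial A.card : ℝ) +
        ∑ π ∈ allWords n,
          (if π ≠ [] ∧ π <:+: σ then F π / (Nat.factorial (A.card - π.length + 1) : ℝ) else 0)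
    else 0

/-- Dirac function `δ_π`. -/
noncomputable def dirac {n : ℕ} (π : Word n) : Word n → ℝ :=
  fun w => if w = π then 1 else 0

/-- `σ|_C`: the induced word of `σ` on `C`. -/
def restrictWord {n : ℕ} (σ : Word n) (C : Finset (Fin n)) : Word n :=
  σ.filter fun a => decide (a ∈ C)

section
variable {n : ℕ}

lemma mem_rankings {n : ℕ} {A : Finset (Fin n)} {w : Word n} :
    w ∈ rankings n A ↔ w.Nodup ∧ w.toFinset = A := by
  rw [rankings, List.mem_toFinset, List.mem_permutations]
  constructor
  · intro h
    refine ⟨h.symm.nodup (Finset.nodup_toList A), ?_⟩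
    rw [List.toFinset_eq_of_perm _ _ h, Finset.toList_toFinset]
  · rintro ⟨h1, h2⟩
    rw [List.perm_ext_iff_of_nodup h1 (Finset.nodup_toList A)]
    intro a
    rw [Finset.mem_toList, ← h2, List.mem_toFinset]

lemma mem_allWords {n : ℕ} {w : Word n} : w ∈ allWords n ↔ w.Nodup := by
  simp only [allWords, Finset.mem_biUnion, Finset.mem_univ, true_and, mem_rankings]
  exact ⟨fun ⟨A, h⟩ => h.1, fun h => ⟨w.toFinset, h, rfl⟩⟩

lemma card_rankings {n : ℕ} (A : Finset (Fin n)) :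
    (rankings n A).card = Nat.factorial A.card := by
  rw [rankings, List.toFinset_card_of_nodup (List.nodup_permutations _ (Finset.nodup_toList A)),
    List.length_permutations, Finset.length_toList]

-- E1
lemma sublist_iff_filter {n : ℕ} {A A' : Finset (Fin n)} {σ τ : Word n}
    (hσ : IsRanking A σ) (hτ : IsRanking A' τ) (h : A' ⊆ A) :
    τ <+ σ ↔ σ.filter (fun a => decide (a ∈ A')) = τ := by
  constructor
  · intro hsub
    have h1 : τ.filter (fun a => decide (a ∈ A')) = τ := by
      rw [List.filter_eq_self]
      intro a ha
      simp [← hτ.2, List.mem_toFinset.2 ha]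
    have h2 : τ <+ σ.filter (fun a => decide (a ∈ A')) := by
      conv_lhs => rw [← h1]
      exact hsub.filter _
    have h3 : (σ.filter (fun a => decide (a ∈ A'))).length = τ.length := by
      have hc : ∀ w : Word n, w.Nodup → (w.filter (fun a => decide (a ∈ A'))).length
          = (w.toFinset.filter (fun a => a ∈ A')).card := by
        intro w hw
        rw [← List.toFinset_card_of_nodup (hw.filter _), List.toFinset_filter]
        simp
      rw [hc σ hσ.1, ← h1, hc τ hτ.1, hσ.2, hτ.2]
      congr 1
      rw [Finset.filter_mem_eq_inter, Finset.filter_mem_eq_inter,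
        Finset.inter_eq_right.2 h, Finset.inter_eq_right.2 (le_refl A')]
    exact (h2.eq_of_length h3.symm).symm
  · rintro rfl
    exact List.filter_sublist

lemma len_of_ranking {C : Finset (Fin n)} {ρ : List (Fin n)} (h : ρ.Nodup) (h2 : ρ.toFinset = C) :
    ρ.length = C.card := by rw [← h2, List.toFinset_card_of_nodup h]

lemma fiber_card_le (A C : Finset (Fin n)) (hCA : C ⊆ A) {ρ₁ ρ₂ : List (Fin n)}
    (h1 : ρ₁.Nodup ∧ ρ₁.toFinset = C) (h2 : ρ₂.Nodup ∧ ρ₂.toFinset = C)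
    (X : Finset (List (Fin n)))
    (hX : ∀ w, w ∈ X ↔ (w.Nodup ∧ w.toFinset = A)) :
    ((X).filter (fun σ => σ.filter (fun a => decide (a ∈ C)) = ρ₁)).card ≤
    ((X).filter (fun σ => σ.filter (fun a => decide (a ∈ C)) = ρ₂)).card := by
  classical
  set e : Fin n → Fin n := fun x => ρ₂.getD (ρ₁.idxOf x) x with he
  have hlen : ρ₁.length = ρ₂.length := by
    rw [len_of_ranking h1.1 h1.2, len_of_ranking h2.1 h2.2]
  have hmem1 : ∀ x : Fin n, x ∈ C ↔ x ∈ ρ₁ := fun x => by rw [← h1.2, List.mem_toFinset]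
  have hmem2 : ∀ x : Fin n, x ∈ C ↔ x ∈ ρ₂ := fun x => by rw [← h2.2, List.mem_toFinset]
  have he_in : ∀ x ∈ C, e x ∈ C := by
    intro x hx
    have hi : ρ₁.idxOf x < ρ₂.length := hlen ▸ List.idxOf_lt_length_iff.2 ((hmem1 x).1 hx)
    rw [he]
    simp only
    rw [List.getD_eq_getElem (hn := hi)]
    exact (hmem2 _).2 (List.getElem_mem _)
  have he_out : ∀ x, x ∉ C → e x = x := by
    intro x hx
    have : ρ₁.idxOf x = ρ₁.length := List.idxOf_eq_length_iff.2 (fun hm => hx ((hmem1 x).2 hm))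
    rw [he]
    simp only
    rw [this, List.getD_eq_default]
    omega
  have he_inj : Function.Injective e := by
    intro x y hxy
    by_cases hx : x ∈ C <;> by_cases hy : y ∈ C
    · have hix : ρ₁.idxOf x < ρ₁.length := List.idxOf_lt_length_iff.2 ((hmem1 x).1 hx)
      have hiy : ρ₁.idxOf y < ρ₁.length := List.idxOf_lt_length_iff.2 ((hmem1 y).1 hy)
      have hex : e x = ρ₂[ρ₁.idxOf x]'(hlen ▸ hix) := List.getD_eq_getElem ρ₂ _ _
      have hey : e y = ρ₂[ρ₁.idxOf y]'(hlen ▸ hiy) := List.getD_eq_getElem ρ₂ _ _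
      rw [hex, hey] at hxy
      have := (h2.1.getElem_inj_iff).1 hxy
      have hx' : ρ₁[ρ₁.idxOf x]'hix = ρ₁[ρ₁.idxOf y]'hiy := by congr 1
      rwa [List.getElem_idxOf, List.getElem_idxOf] at hx'
    · exfalso; apply hy
      have hc : e x ∈ C := he_in x hx
      rw [hxy, he_out y hy] at hc; exact hc
    · exfalso; apply hx
      have hc : e y ∈ C := he_in y hy
      rw [← hxy, he_out x hx] at hc; exact hc
    · rw [he_out x hx, he_out y hy] at hxy; exact hxy
  have he_C : ∀ x, (e x ∈ C) = (x ∈ C) := by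
    intro x
    by_cases hx : x ∈ C
    · simp [hx, he_in x hx]
    · simp [hx, he_out x hx]
  have hkey : ∀ (i : ℕ) (hi : i < ρ₁.length), e (ρ₁[i]'hi) = ρ₂[i]'(hlen ▸ hi) := by
    intro i hi
    have hidx : ρ₁.idxOf (ρ₁[i]'hi) = i := List.Nodup.idxOf_getElem h1.1 i hi
    show ρ₂.getD (ρ₁.idxOf (ρ₁[i]'hi)) _ = _
    rw [hidx]
    exact List.getD_eq_getElem ρ₂ _ _
  have hmap12 : ρ₁.map e = ρ₂ := by
    apply List.ext_getElem (by rw [List.length_map, hlen])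
    intro i hi1 hi2
    rw [List.getElem_map]
    exact hkey i (by simpa using hi1)
  apply Finset.card_le_card_of_injOn (fun σ => σ.map e)
  · intro σ hσ
    simp only [Finset.coe_filter, Set.mem_setOf_eq, Finset.mem_coe, Finset.mem_filter] at hσ ⊢
    obtain ⟨hσA, hσf⟩ := hσ
    have hσA' := (hX σ).1 hσA
    have himg : Finset.image e A = A := by
      apply Finset.eq_of_subset_of_card_le
      · intro y hy
        obtain ⟨x, hxA, rfl⟩ := Finset.mem_image.1 hy
        by_cases hx : x ∈ C
        · exact hCA (he_in x hx)
        · rw [he_out x hx]; exact hxA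
      · rw [Finset.card_image_of_injective _ he_inj]
    constructor
    · rw [hX]
      refine ⟨hσA'.1.map he_inj, ?_⟩
      have hmt : (List.map e σ).toFinset = σ.toFinset.image e := by
        ext a; simp [List.mem_map]
      rw [hmt, hσA'.2, himg]
    · rw [List.filter_map]
      have hfc : σ.filter ((fun a => decide (a ∈ C)) ∘ e) = σ.filter (fun a => decide (a ∈ C)) := by
        apply List.filter_congr
        intro x _
        simp only [Function.comp, he_C x]
      rw [hfc, hσf, hmap12]
  · intro x _ y _ h
    exact List.map_injective_iff.2 he_inj h

lemma filter_ranking_mem {A C : Finset (Fin n)} (hCA : C ⊆ A) {σ : List (Fin n)}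
    (hσ : σ.Nodup ∧ σ.toFinset = A) :
    (σ.filter (fun a => decide (a ∈ C))).Nodup ∧
      (σ.filter (fun a => decide (a ∈ C))).toFinset = C := by
  refine ⟨hσ.1.filter _, ?_⟩
  rw [List.toFinset_filter]
  have : σ.toFinset.filter (fun a => decide (a ∈ C)) = σ.toFinset.filter (fun a => a ∈ C) := by
    simp
  rw [this, hσ.2, Finset.filter_mem_eq_inter, Finset.inter_eq_right.2 hCA]

lemma c0 (A C : Finset (Fin n)) (hCA : C ⊆ A) {ρ : List (Fin n)}
    (hρ : ρ.Nodup ∧ ρ.toFinset = C) :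
    ((rankings n A).filter (fun σ => σ.filter (fun a => decide (a ∈ C)) = ρ)).card
      * Nat.factorial C.card = Nat.factorial A.card := by
  classical
  have hmaps : ∀ σ ∈ rankings n A, σ.filter (fun a => decide (a ∈ C)) ∈ rankings n C := by
    intro σ hσ
    exact mem_rankings.2 (filter_ranking_mem hCA (mem_rankings.1 hσ))
  have hsum := Finset.card_eq_sum_card_fiberwise hmaps
  have hconst : ∀ ρ' ∈ rankings n C,
      ((rankings n A).filter (fun σ => σ.filter (fun a => decide (a ∈ C)) = ρ')).card =
      ((rankings n A).filter (fun σ => σ.filter (fun a => decide (a ∈ C)) = ρ)).card := by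
    intro ρ' hρ'
    exact le_antisymm
      (fiber_card_le A C hCA (mem_rankings.1 hρ') hρ _ (fun w => mem_rankings))
      (fiber_card_le A C hCA hρ (mem_rankings.1 hρ') _ (fun w => mem_rankings))
  rw [← card_rankings A, hsum, Finset.sum_congr rfl hconst, Finset.sum_const,
    card_rankings C, smul_eq_mul, mul_comm]

lemma filter_flatMap' (l : List (Fin n)) (f : Fin n → List (Fin n)) (p : Fin n → Bool) :
    (l.flatMap f).filter p = l.flatMap (fun x => (f x).filter p) := by
  induction l with
  | nil => rfl
  | cons a l ih => simp [List.flatMap_cons, List.filter_append, ih]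

lemma flatMap_eq_self (l : List (Fin n)) (f : Fin n → List (Fin n))
    (h : ∀ x ∈ l, f x = [x]) : l.flatMap f = l := by
  induction l with
  | nil => rfl
  | cons a l ih =>
    rw [List.flatMap_cons, h a (List.mem_cons_self), ih (fun x hx => h x (List.mem_cons_of_mem a hx))]
    rfl

lemma filter_eq_single {π : List (Fin n)} (hπ : π.Nodup) {b : Fin n} (hb : b ∈ π) :
    π.filter (fun x => decide (x = b)) = [b] := by
  obtain ⟨u, v, rfl⟩ := List.append_of_mem hb
  have hu : b ∉ u := fun h => ((List.nodup_append'.1 hπ).2.2 h (List.mem_cons_self)).elim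
  have hv : b ∉ v := by
    have := (List.nodup_append'.1 hπ).2.1
    exact fun h => (List.nodup_cons.1 this).1 h
  rw [List.filter_append, List.filter_cons]
  have h1 : u.filter (fun x => decide (x = b)) = [] := by
    rw [List.filter_eq_nil_iff]
    intro x hx
    simp only [decide_eq_true_eq]
    rintro rfl; exact hu hx
  have h2 : v.filter (fun x => decide (x = b)) = [] := by
    rw [List.filter_eq_nil_iff]
    intro x hx
    simp only [decide_eq_true_eq]
    rintro rfl; exact hv hx
  simp [h1, h2]

lemma content_split {u v π : List (Fin n)} {A B : Finset (Fin n)}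
    (hn : (u ++ (π ++ v)).Nodup) (hπ : π.toFinset = B) (hA : (u ++ (π ++ v)).toFinset = A) :
    u.toFinset ∪ v.toFinset = A \ B := by
  have hd1 : ∀ a ∈ u, a ∉ π := fun a ha hπa =>
    (List.nodup_append'.1 hn).2.2 ha (List.mem_append_left v hπa)
  have hd2 : ∀ a ∈ v, a ∉ π := fun a ha hπa =>
    (List.disjoint_of_nodup_append (List.nodup_append'.1 hn).2.1) hπa ha
  ext a
  simp only [Finset.mem_union, List.mem_toFinset, Finset.mem_sdiff, ← hA, ← hπ,
    List.toFinset_append, Finset.mem_union, List.mem_toFinset]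
  constructor
  · rintro (h | h)
    · exact ⟨Or.inl h, hd1 a h⟩
    · exact ⟨Or.inr (Or.inr h), hd2 a h⟩
  · rintro ⟨h | h | h, hB⟩
    · exact Or.inl h
    · exact absurd h hB
    · exact Or.inr h

lemma expand_bij (A B : Finset (Fin n)) (hBA : B ⊆ A) {π : List (Fin n)}
    (hπn : π.Nodup) (hπB : π.toFinset = B) {b : Fin n} (hb : b ∈ π)
    (p : List (Fin n) → Prop) [DecidablePred p] :
    ((rankings n ((A \ B) ∪ {b})).filter
      (fun σ' => p (σ'.flatMap (fun x => if x = b then π else [x])))).card =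
    ((rankings n A).filter (fun σ => p σ ∧ π <:+: σ)).card := by
  classical
  have hbB : b ∈ B := hπB ▸ List.mem_toFinset.2 hb
  have hbA' : b ∈ (A \ B) ∪ {b} := Finset.mem_union_right _ (Finset.mem_singleton_self b)
  have hEfree : ∀ l : List (Fin n), b ∉ l →
      l.flatMap (fun x => if x = b then π else [x]) = l := by
    intro l hl
    apply flatMap_eq_self
    intro x hx
    have hxb : x ≠ b := by rintro rfl; exact hl hx
    rw [if_neg hxb]
  have hEdec : ∀ u v : List (Fin n), b ∉ u → b ∉ v →
      (u ++ b :: v).flatMap (fun x => if x = b then π else [x]) = u ++ (π ++ v) := by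
    intro u v hu hv
    rw [List.flatMap_append, List.flatMap_cons, if_pos rfl, hEfree u hu, hEfree v hv]
  -- collapse
  have hK : ∀ σ' : List (Fin n), σ'.Nodup → σ'.toFinset = (A \ B) ∪ {b} →
      (σ'.flatMap (fun x => if x = b then π else [x])).filter
        (fun x => decide (x ∈ (A \ B) ∪ {b})) = σ' := by
    intro σ' hn' hc'
    rw [filter_flatMap']
    apply flatMap_eq_self
    intro x hx
    by_cases hxb : x = b
    · rw [if_pos hxb, hxb]
      have hcg : ∀ y ∈ π, (decide (y ∈ (A \ B) ∪ {b})) = (decide (y = b)) := by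
        intro y hy
        have hyB : y ∈ B := hπB ▸ List.mem_toFinset.2 hy
        by_cases h : y = b
        · rw [h]
          simp [hbA']
        · simp only [decide_eq_decide]
          simp only [Finset.mem_union, Finset.mem_sdiff, Finset.mem_singleton]
          constructor
          · rintro (⟨_, hyB'⟩ | h')
            · exact absurd hyB hyB'
            · exact h'
          · intro h'; exact absurd h' h
      rw [List.filter_congr hcg, filter_eq_single hπn hb]
    · rw [if_neg hxb, List.filter_cons, List.filter_nil]
      have hxm : x ∈ (A \ B) ∪ {b} := hc' ▸ List.mem_toFinset.2 hx
      rw [if_pos (decide_eq_true hxm)]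
  apply Finset.card_bij (fun σ' _ => σ'.flatMap (fun x => if x = b then π else [x]))
  · -- maps to
    intro σ' hσ'
    simp only [Finset.mem_filter] at hσ' ⊢
    obtain ⟨hσ'r, hσ'p⟩ := hσ'
    obtain ⟨hn', hc'⟩ := mem_rankings.1 hσ'r
    have hbm : b ∈ σ' := List.mem_toFinset.1 (hc' ▸ hbA')
    obtain ⟨u, v, rfl⟩ := List.append_of_mem hbm
    have hu : b ∉ u := fun h => ((List.nodup_append'.1 hn').2.2 h (List.mem_cons_self)).elim
    have hv : b ∉ v := (List.nodup_cons.1 (List.nodup_append'.1 hn').2.1).1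
    have hEuv := hEdec u v hu hv
    have huB : ∀ a ∈ u, a ∉ B := by
      intro a ha haB
      have : a ∈ (A \ B) ∪ {b} := hc' ▸ List.mem_toFinset.2 (List.mem_append_left _ ha)
      rcases Finset.mem_union.1 this with h | h
      · exact (Finset.mem_sdiff.1 h).2 haB
      · exact hu ((Finset.mem_singleton.1 h) ▸ ha)
    have hvB : ∀ a ∈ v, a ∉ B := by
      intro a ha haB
      have : a ∈ (A \ B) ∪ {b} :=
        hc' ▸ List.mem_toFinset.2 (List.mem_append_right _ (List.mem_cons_of_mem b ha))
      rcases Finset.mem_union.1 this with h | h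
      · exact (Finset.mem_sdiff.1 h).2 haB
      · exact hv ((Finset.mem_singleton.1 h) ▸ ha)
    have huv : u.toFinset ∪ v.toFinset = A \ B := by
      have := content_split (u := u) (v := v) (π := [b]) (A := (A \ B) ∪ {b}) (B := {b}) ?_ (by simp) ?_
      · rw [this]
        ext a
        simp only [Finset.mem_sdiff, Finset.mem_union, Finset.mem_singleton]
        constructor
        · rintro ⟨h | h, h2⟩
          · exact h
          · exact absurd h h2
        · intro h
          exact ⟨Or.inl h, fun e => h.2 (e ▸ hbB)⟩
      · simpa using hn'
      · simpa using hc'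
    rw [hEuv]
    have hnodup : (u ++ (π ++ v)).Nodup := by
      rw [List.nodup_append']
      have h0 := List.nodup_append'.1 hn'
      have h1 := List.nodup_cons.1 h0.2.1
      refine ⟨h0.1, ?_, ?_⟩
      · rw [List.nodup_append']
        refine ⟨hπn, h1.2, ?_⟩
        intro a haπ hav
        exact hvB a hav (hπB ▸ List.mem_toFinset.2 haπ)
      · intro a hau haπv
        rcases List.mem_append.1 haπv with h | h
        · exact huB a hau (hπB ▸ List.mem_toFinset.2 h)
        · exact h0.2.2 hau (List.mem_cons_of_mem b h)
    rw [hEuv] at hσ'p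
    refine ⟨mem_rankings.2 ⟨hnodup, ?_⟩, hσ'p, u, v, List.append_assoc u π v⟩
    · have : (u ++ (π ++ v)).toFinset = u.toFinset ∪ v.toFinset ∪ B := by
        simp only [List.toFinset_append, hπB]
        ext a
        simp only [Finset.mem_union]
        tauto
      rw [this, huv]
      ext a
      simp only [Finset.mem_union, Finset.mem_sdiff]
      constructor
      · rintro (⟨h, _⟩ | h)
        · exact h
        · exact hBA h
      · intro h
        by_cases hB : a ∈ B
        · exact Or.inr hB
        · exact Or.inl ⟨h, hB⟩
  · -- injective
    intro σ₁ h₁ σ₂ h₂ hEq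
    have r₁ := mem_rankings.1 (Finset.mem_filter.1 h₁).1
    have r₂ := mem_rankings.1 (Finset.mem_filter.1 h₂).1
    rw [← hK σ₁ r₁.1 r₁.2, ← hK σ₂ r₂.1 r₂.2, hEq]
  · -- surjective
    intro σ hσ
    simp only [Finset.mem_filter] at hσ
    obtain ⟨hσr, hσp, hinf⟩ := hσ
    obtain ⟨u, v, rfl⟩ := hinf
    obtain ⟨hn0, hc0⟩ := mem_rankings.1 hσr
    have hn' : (u ++ (π ++ v)).Nodup := by rwa [← List.append_assoc]
    have hc' : (u ++ (π ++ v)).toFinset = A := by rwa [← List.append_assoc]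
    have hσp' : p (u ++ (π ++ v)) := by rwa [← List.append_assoc]
    have hu : b ∉ u := by
      intro h
      exact (List.nodup_append'.1 hn').2.2 h (List.mem_append_left v hb)
    have hv : b ∉ v := by
      intro h
      exact (List.disjoint_of_nodup_append (List.nodup_append'.1 hn').2.1) hb h
    refine ⟨u ++ b :: v, ?_, ?_⟩
    · simp only [Finset.mem_filter]
      have hnodup : (u ++ b :: v).Nodup := by
        rw [List.nodup_append']
        have h0 := List.nodup_append'.1 hn'
        have h1 := List.nodup_append'.1 h0.2.1
        refine ⟨h0.1, ?_, ?_⟩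
        · rw [List.nodup_cons]
          exact ⟨hv, h1.2.1⟩
        · intro a hau hab
          rcases List.mem_cons.1 hab with h | h
          · exact hu (h ▸ hau)
          · exact h0.2.2 hau (List.mem_append_right π h)
      have hcontent : (u ++ b :: v).toFinset = (A \ B) ∪ {b} := by
        have huv := content_split hn' hπB hc'
        ext a
        simp only [List.toFinset_append, List.toFinset_cons, Finset.mem_union,
          List.mem_toFinset, Finset.mem_insert, Finset.mem_singleton]
        constructor
        · rintro (h | h | h)
          · exact Or.inl (huv ▸ Finset.mem_union_left _ (List.mem_toFinset.2 h))
          · exact Or.inr h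
          · exact Or.inl (huv ▸ Finset.mem_union_right _ (List.mem_toFinset.2 h))
        · rintro (h | h)
          · rw [← huv] at h
            rcases Finset.mem_union.1 h with h | h
            · exact Or.inl (List.mem_toFinset.1 h)
            · exact Or.inr (Or.inr (List.mem_toFinset.1 h))
          · exact Or.inr (Or.inl h)
      refine ⟨mem_rankings.2 ⟨hnodup, hcontent⟩, ?_⟩
      rw [hEdec u v hu hv]
      exact hσp'
    · exact (hEdec u v hu hv).trans (List.append_assoc u π v).symm

lemma collapse_expand {π : List (Fin n)} (hπn : π.Nodup) {b : Fin n} (hb : b ∈ π)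
    (D : Finset (Fin n)) (σ' : List (Fin n))
    (h1 : ∀ y ∈ π, (y ∈ D ↔ y = b)) (h2 : ∀ x ∈ σ', x ∈ D) :
    (σ'.flatMap (fun x => if x = b then π else [x])).filter (fun x => decide (x ∈ D)) = σ' := by
  rw [filter_flatMap']
  apply flatMap_eq_self
  intro x hx
  by_cases hxb : x = b
  · rw [if_pos hxb, hxb]
    have hcg : ∀ y ∈ π, (decide (y ∈ D)) = (decide (y = b)) := by
      intro y hy
      simp only [decide_eq_decide]
      exact h1 y hy
    rw [List.filter_congr hcg, filter_eq_single hπn hb]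
  · rw [if_neg hxb, List.filter_cons, List.filter_nil]
    simp [h2 x hx]

lemma Infix.filter'' {σ τ : List (Fin n)} (p : Fin n → Bool) (h : τ <:+: σ) :
    τ.filter p <:+: σ.filter p := by
  obtain ⟨u, v, rfl⟩ := h
  exact ⟨u.filter p, v.filter p, by simp⟩

lemma flatMap_singleton_filter (l : List (Fin n)) (q : Fin n → Bool) :
    l.flatMap (fun x => [x].filter q) = l.filter q := by
  induction l with
  | nil => rfl
  | cons a l ih => rw [List.flatMap_cons, ih, List.filter_cons]; by_cases h : q a <;> simp [h]

lemma filter_flatMap_comm (l : List (Fin n)) (r : Fin n → Bool) (g : Fin n → List (Fin n)) :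
    (l.filter r).flatMap g = l.flatMap (fun x => if r x then g x else []) := by
  induction l with
  | nil => rfl
  | cons a l ih =>
    rw [List.filter_cons]
    by_cases h : r a
    · simp only [h, if_true, List.flatMap_cons, ih]
    · simp only [List.flatMap_cons, if_neg h, List.nil_append]
      exact ih

-- MASTER 1 : b ∈ A'
lemma master1 (A A' B : Finset (Fin n)) (hA'A : A' ⊆ A) (hBA : B ⊆ A)
    {τ π : List (Fin n)} (hτ : τ.Nodup ∧ τ.toFinset = A') (hπ : π.Nodup ∧ π.toFinset = B)
    {b : Fin n} (hbπ : b ∈ π) (hbA' : b ∈ A') :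
    ((rankings n A).filter
        (fun σ => σ.filter (fun a => decide (a ∈ A')) = τ ∧ π <:+: σ)).card
      * Nat.factorial ((A' \ B) ∪ {b}).card
    = if (π.filter (fun a => decide (a ∈ A'))) <:+: τ
        then Nat.factorial ((A \ B) ∪ {b}).card else 0 := by
  classical
  set π' := π.filter (fun a => decide (a ∈ A')) with hπ'
  have hbB : b ∈ B := hπ.2 ▸ List.mem_toFinset.2 hbπ
  by_cases hocc : π' <:+: τ
  · rw [if_pos hocc]
    -- the Y-side set equals a c0 fiber set
    rw [← expand_bij A B hBA hπ.1 hπ.2 hbπ (fun σ => σ.filter (fun a => decide (a ∈ A')) = τ)]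
    have hπ'n : π'.Nodup := hπ.1.filter _
    have hbπ' : b ∈ π' := List.mem_filter.2 ⟨hbπ, by simpa using hbA'⟩
    have hπ'B : ∀ y ∈ π', y ∈ B ∧ y ∈ A' := by
      intro y hy
      have h1 := List.mem_filter.1 hy
      exact ⟨hπ.2 ▸ List.mem_toFinset.2 h1.1, by simpa using h1.2⟩
    -- τ' computation
    obtain ⟨x, y, hxy⟩ := hocc
    have hτn : τ.Nodup := hτ.1
    have hbx : b ∉ x := by
      intro h
      rw [← hxy, List.append_assoc] at hτn
      exact (List.nodup_append'.1 hτn).2.2 h (List.mem_append_left y hbπ')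
    have hby : b ∉ y := by
      intro h
      rw [← hxy, List.append_assoc] at hτn
      exact (List.disjoint_of_nodup_append (List.nodup_append'.1 hτn).2.1) hbπ' h
    have hxB : ∀ a ∈ x, a ∈ A' ∧ a ∉ B := by
      intro a ha
      have haA' : a ∈ A' := hτ.2 ▸ List.mem_toFinset.2 (by rw [← hxy]; exact List.mem_append_left _ (List.mem_append_left _ ha))
      refine ⟨haA', fun haB => ?_⟩
      have haπ : a ∈ π := by rw [← List.mem_toFinset, hπ.2]; exact haB
      have haπ' : a ∈ π' := List.mem_filter.2 ⟨haπ, by simpa using haA'⟩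
      rw [← hxy, List.append_assoc] at hτn
      exact (List.nodup_append'.1 hτn).2.2 ha (List.mem_append_left y haπ')
    have hyB : ∀ a ∈ y, a ∈ A' ∧ a ∉ B := by
      intro a ha
      have haA' : a ∈ A' := hτ.2 ▸ List.mem_toFinset.2 (by rw [← hxy]; exact List.mem_append_right _ ha)
      refine ⟨haA', fun haB => ?_⟩
      have haπ : a ∈ π := by rw [← List.mem_toFinset, hπ.2]; exact haB
      have haπ' : a ∈ π' := List.mem_filter.2 ⟨haπ, by simpa using haA'⟩
      rw [← hxy, List.append_assoc] at hτn
      exact (List.disjoint_of_nodup_append (List.nodup_append'.1 hτn).2.1) haπ' ha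
    have hτ' : τ.filter (fun a => decide (a ∈ (A' \ B) ∪ {b})) = x ++ b :: y := by
      rw [← hxy, List.filter_append, List.filter_append]
      have hx' : x.filter (fun a => decide (a ∈ (A' \ B) ∪ {b})) = x := by
        rw [List.filter_eq_self]
        intro a ha
        simp only [decide_eq_true_eq, Finset.mem_union, Finset.mem_sdiff, Finset.mem_singleton]
        exact Or.inl ⟨(hxB a ha).1, (hxB a ha).2⟩
      have hy' : y.filter (fun a => decide (a ∈ (A' \ B) ∪ {b})) = y := by
        rw [List.filter_eq_self]
        intro a ha
        simp only [decide_eq_true_eq, Finset.mem_union, Finset.mem_sdiff, Finset.mem_singleton]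
        exact Or.inl ⟨(hyB a ha).1, (hyB a ha).2⟩
      have hπ'f : π'.filter (fun a => decide (a ∈ (A' \ B) ∪ {b})) = [b] := by
        have hcg : ∀ a ∈ π', (decide (a ∈ (A' \ B) ∪ {b})) = (decide (a = b)) := by
          intro a ha
          simp only [decide_eq_decide, Finset.mem_union, Finset.mem_sdiff, Finset.mem_singleton]
          constructor
          · rintro (⟨_, hnB⟩ | h)
            · exact absurd (hπ'B a ha).1 hnB
            · exact h
          · intro h; exact Or.inr h
        rw [List.filter_congr hcg, filter_eq_single hπ'n hbπ']
      rw [hx', hy', hπ'f]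
      simp
    -- now identify Y-set with c0 fiber
    have hAeq : (A' \ B) ∪ {b} ⊆ (A \ B) ∪ {b} := by
      intro a ha
      rcases Finset.mem_union.1 ha with h | h
      · exact Finset.mem_union_left _ (Finset.mem_sdiff.2 ⟨hA'A (Finset.mem_sdiff.1 h).1, (Finset.mem_sdiff.1 h).2⟩)
      · exact Finset.mem_union_right _ h
    have hfilt : ∀ σ' ∈ rankings n ((A \ B) ∪ {b}),
        ((σ'.flatMap (fun z => if z = b then π else [z])).filter (fun a => decide (a ∈ A')) = τ)
        ↔ (σ'.filter (fun a => decide (a ∈ (A' \ B) ∪ {b})) = x ++ b :: y) := by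
      intro σ' hσ'
      obtain ⟨hn', hc'⟩ := mem_rankings.1 hσ'
      have hσ'mem : ∀ z ∈ σ', z = b ∨ (z ∈ A ∧ z ∉ B) := by
        intro z hz
        have := hc' ▸ List.mem_toFinset.2 hz
        rcases Finset.mem_union.1 this with h | h
        · exact Or.inr (Finset.mem_sdiff.1 h)
        · exact Or.inl (Finset.mem_singleton.1 h)
      -- LHS list equals E' (σ'.filter q'')
      have hcompute : (σ'.flatMap (fun z => if z = b then π else [z])).filter (fun a => decide (a ∈ A'))
          = (σ'.filter (fun z => decide (z ∈ (A' \ B) ∪ {b}))).flatMap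
              (fun z => if z = b then π' else [z]) := by
        rw [filter_flatMap', filter_flatMap_comm]
        apply List.flatMap_congr
        intro z hz
        by_cases hzb : z = b
        · rw [if_pos hzb, hzb]
          have hbm : (decide (b ∈ (A' \ B) ∪ {b})) = true := by simp
          rw [hbm, if_pos rfl, if_pos rfl]
        · rw [if_neg hzb]
          rcases hσ'mem z hz with h | h
          · exact absurd h hzb
          · have : (decide (z ∈ (A' \ B) ∪ {b})) = decide (z ∈ A') := by
              simp only [decide_eq_decide, Finset.mem_union, Finset.mem_sdiff, Finset.mem_singleton]
              constructor
              · rintro (⟨h1, _⟩ | h1)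
                · exact h1
                · exact absurd h1 hzb
              · intro h1; exact Or.inl ⟨h1, h.2⟩
            rw [this]
            by_cases hq : z ∈ A'
            · simp [hq, if_neg hzb]
            · simp [hq]
      rw [hcompute]
      constructor
      · intro h
        -- apply collapse to both sides
        have hρ := filter_ranking_mem (C := (A' \ B) ∪ {b}) hAeq ⟨hn', hc'⟩
        have hcoll := collapse_expand hπ'n hbπ' ((A' \ B) ∪ {b})
          (σ'.filter (fun z => decide (z ∈ (A' \ B) ∪ {b})))
          (fun w hw => by
            constructor
            · intro hmem
              rcases Finset.mem_union.1 hmem with hm | hm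
              · exact absurd (hπ'B w hw).1 (Finset.mem_sdiff.1 hm).2
              · exact Finset.mem_singleton.1 hm
            · intro hwb
              rw [hwb]
              exact Finset.mem_union_right _ (Finset.mem_singleton_self b))
          (fun z hz => hρ.2 ▸ List.mem_toFinset.2 hz)
        rw [h] at hcoll
        rw [← hcoll, hτ']
      · intro h
        rw [h]
        -- E' (x ++ b :: y) = τ
        rw [List.flatMap_append, List.flatMap_cons, if_pos rfl]
        have hfx : x.flatMap (fun z => if z = b then π' else [z]) = x := by
          apply flatMap_eq_self
          intro z hz
          rw [if_neg (by rintro rfl; exact hbx hz)]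
        have hfy : y.flatMap (fun z => if z = b then π' else [z]) = y := by
          apply flatMap_eq_self
          intro z hz
          rw [if_neg (by rintro rfl; exact hby hz)]
        rw [hfx, hfy, ← List.append_assoc, hxy]
    rw [Finset.filter_congr hfilt]
    -- now c0
    have hτ'mem : (x ++ b :: y).Nodup ∧ (x ++ b :: y).toFinset = (A' \ B) ∪ {b} := by
      rw [← hτ']
      exact filter_ranking_mem (A := A') (by
        intro a ha
        rcases Finset.mem_union.1 ha with h | h
        · exact (Finset.mem_sdiff.1 h).1
        · exact (Finset.mem_singleton.1 h) ▸ hbA') hτ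
    exact c0 ((A \ B) ∪ {b}) ((A' \ B) ∪ {b}) hAeq hτ'mem
  · rw [if_neg hocc]
    rw [Finset.card_eq_zero.2, Nat.zero_mul]
    rw [Finset.filter_eq_empty_iff]
    intro σ hσ
    rintro ⟨hfil, hinf⟩
    exact hocc (hfil ▸ Infix.filter'' (fun a => decide (a ∈ A')) hinf)

-- MASTER 0 : B ∩ A' = ∅
lemma master0 (A A' B : Finset (Fin n)) (hA'A : A' ⊆ A) (hBA : B ⊆ A) (hdisj : ∀ a ∈ B, a ∉ A')
    {τ π : List (Fin n)} (hτ : τ.Nodup ∧ τ.toFinset = A') (hπ : π.Nodup ∧ π.toFinset = B)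
    {b : Fin n} (hbπ : b ∈ π) :
    ((rankings n A).filter
        (fun σ => σ.filter (fun a => decide (a ∈ A')) = τ ∧ π <:+: σ)).card
      * Nat.factorial A'.card
    = Nat.factorial ((A \ B) ∪ {b}).card := by
  classical
  have hbB : b ∈ B := hπ.2 ▸ List.mem_toFinset.2 hbπ
  rw [← expand_bij A B hBA hπ.1 hπ.2 hbπ (fun σ => σ.filter (fun a => decide (a ∈ A')) = τ)]
  have hfilt : ∀ σ' ∈ rankings n ((A \ B) ∪ {b}),
      ((σ'.flatMap (fun z => if z = b then π else [z])).filter (fun a => decide (a ∈ A')) = τ)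
      ↔ (σ'.filter (fun a => decide (a ∈ A')) = τ) := by
    intro σ' hσ'
    have hcompute : (σ'.flatMap (fun z => if z = b then π else [z])).filter (fun a => decide (a ∈ A'))
        = σ'.filter (fun a => decide (a ∈ A')) := by
      rw [filter_flatMap']
      rw [← flatMap_singleton_filter σ' (fun a => decide (a ∈ A'))]
      apply List.flatMap_congr
      intro z hz
      by_cases hzb : z = b
      · rw [if_pos hzb]
        have h1 : π.filter (fun a => decide (a ∈ A')) = [] := by
          rw [List.filter_eq_nil_iff]
          intro a ha
          simp only [decide_eq_true_eq]
          exact hdisj a (hπ.2 ▸ List.mem_toFinset.2 ha)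
        have h2 : [z].filter (fun a => decide (a ∈ A')) = [] := by
          rw [List.filter_eq_nil_iff]
          intro a ha
          simp only [List.mem_singleton] at ha
          simp only [decide_eq_true_eq]
          rw [ha, hzb]
          exact hdisj b hbB
        rw [h1, h2]
      · rw [if_neg hzb]
    rw [hcompute]
  rw [Finset.filter_congr hfilt]
  exact c0 ((A \ B) ∪ {b}) A' (by
    intro a ha
    by_cases haB : a ∈ B
    · exact absurd ha (hdisj a haB)
    · exact Finset.mem_union_left _ (Finset.mem_sdiff.2 ⟨hA'A ha, haB⟩)) hτ

lemma rankings_sub_allWords {A : Finset (Fin n)} : rankings n A ⊆ allWords n :=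
  fun w hw => mem_allWords.2 (mem_rankings.1 hw).1

lemma key {A A' B : Finset (Fin n)} (hA'A : A' ⊆ A) (hBA : B ⊆ A)
    {τ : Word n} (hτ : IsRanking A' τ) {F : Word n → ℝ} (hF : MemL B F) :
    marg A' (synth A F) τ =
      (((rankings n A).filter (fun σ => σ.filter (fun a => decide (a ∈ A')) = τ)).card : ℝ)
        * (F [] / (Nat.factorial A.card : ℝ))
      + ∑ π ∈ rankings n B, (if π ≠ [] then
          F π * (((rankings n A).filter (fun σ =>
              σ.filter (fun a => decide (a ∈ A')) = τ ∧ π <:+: σ)).card : ℝ)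
            / (Nat.factorial (A.card - π.length + 1) : ℝ) else 0) := by
  classical
  unfold marg
  rw [if_pos hτ]
  have h1 : ∑ σ ∈ allWords n, (if τ <+ σ then synth A F σ else 0)
      = ∑ σ ∈ rankings n A, (if τ <+ σ then synth A F σ else 0) := by
    symm
    apply Finset.sum_subset rankings_sub_allWords
    intro σ hσ hnot
    have hs : synth A F σ = 0 := by
      unfold synth
      rw [if_neg (fun h => hnot (mem_rankings.2 ⟨h.1, h.2⟩))]
    rw [hs, ite_self]
  rw [h1]
  have h2 : ∀ σ ∈ rankings n A, (if τ <+ σ then synth A F σ else 0)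
      = (if σ.filter (fun a => decide (a ∈ A')) = τ then
          (F [] / (Nat.factorial A.card : ℝ) +
            ∑ π ∈ allWords n, (if π ≠ [] ∧ π <:+: σ then
              F π / (Nat.factorial (A.card - π.length + 1) : ℝ) else 0)) else 0) := by
    intro σ hσ
    have hσR : IsRanking A σ := mem_rankings.1 hσ
    have hs : synth A F σ = F [] / (Nat.factorial A.card : ℝ) +
        ∑ π ∈ allWords n, (if π ≠ [] ∧ π <:+: σ then
          F π / (Nat.factorial (A.card - π.length + 1) : ℝ) else 0) := by
      unfold synth
      rw [if_pos hσR]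
    rw [hs]
    exact if_congr (sublist_iff_filter hσR hτ hA'A) rfl rfl
  rw [Finset.sum_congr rfl h2, ← Finset.sum_filter, Finset.sum_add_distrib,
    Finset.sum_const, nsmul_eq_mul]
  congr 1
  rw [Finset.sum_comm]
  rw [← Finset.sum_subset (rankings_sub_allWords (A := B))]
  · apply Finset.sum_congr rfl
    intro π hπ
    by_cases hπ0 : π = []
    · rw [if_neg (fun h => h hπ0)]
      apply Finset.sum_eq_zero
      intro σ hσ
      rw [if_neg (fun h => h.1 hπ0)]
    · rw [if_pos hπ0]
      have : ∀ σ ∈ (rankings n A).filter (fun σ => σ.filter (fun a => decide (a ∈ A')) = τ),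
          (if π ≠ [] ∧ π <:+: σ then F π / (Nat.factorial (A.card - π.length + 1) : ℝ) else 0)
          = (if π <:+: σ then F π / (Nat.factorial (A.card - π.length + 1) : ℝ) else 0) := by
        intro σ _
        by_cases h : π <:+: σ
        · rw [if_pos ⟨hπ0, h⟩, if_pos h]
        · rw [if_neg (fun hh => h hh.2), if_neg h]
      rw [Finset.sum_congr rfl this, ← Finset.sum_filter, Finset.sum_const, nsmul_eq_mul,
        Finset.filter_filter]
      ring
  · intro π hπ hnot
    by_cases h : F π = 0
    · simp [h]
    · exact absurd (mem_rankings.2 ⟨(hF π h).1, (hF π h).2⟩) hnot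

lemma marg_eq_fiber_sum {B' B : Finset (Fin n)} (hB'B : B' ⊆ B) {ρ : Word n}
    (hρ : IsRanking B' ρ) {F : Word n → ℝ} (hF : MemL B F) :
    marg B' F ρ = ∑ π ∈ (rankings n B).filter
      (fun π => π.filter (fun a => decide (a ∈ B')) = ρ), F π := by
  classical
  unfold marg
  rw [if_pos hρ]
  have h1 : ∑ σ ∈ allWords n, (if ρ <+ σ then F σ else 0)
      = ∑ σ ∈ rankings n B, (if ρ <+ σ then F σ else 0) := by
    symm
    apply Finset.sum_subset rankings_sub_allWords
    intro σ hσ hnot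
    by_cases h : F σ = 0
    · simp [h]
    · exact absurd (mem_rankings.2 ⟨(hF σ h).1, (hF σ h).2⟩) hnot
  rw [h1, Finset.sum_filter]
  apply Finset.sum_congr rfl
  intro σ hσ
  exact if_congr (sublist_iff_filter (mem_rankings.1 hσ) hρ hB'B) rfl rfl

lemma cast_count_div {c d e : ℕ} {P : Prop} [Decidable P]
    (h : c * Nat.factorial d = if P then Nat.factorial e else 0) (x : ℝ) :
    x * (c : ℝ) / (Nat.factorial e : ℝ) = if P then x / (Nat.factorial d : ℝ) else 0 := by
  have hd : (Nat.factorial d : ℝ) ≠ 0 := Nat.cast_ne_zero.2 (Nat.factorial_ne_zero d)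
  have he : (Nat.factorial e : ℝ) ≠ 0 := Nat.cast_ne_zero.2 (Nat.factorial_ne_zero e)
  by_cases hP : P
  · rw [if_pos hP] at h ⊢
    have h' : (c : ℝ) * (Nat.factorial d : ℝ) = (Nat.factorial e : ℝ) := by exact_mod_cast h
    field_simp
    rw [mul_assoc, h']
  · rw [if_neg hP] at h ⊢
    have hc : c = 0 := by
      rcases Nat.mul_eq_zero.1 h with h' | h'
      · exact h'
      · exact absurd h' (Nat.factorial_ne_zero d)
    simp [hc]

lemma cast_count_div' {c d e : ℕ} (h : c * Nat.factorial d = Nat.factorial e) (x : ℝ) :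
    x * (c : ℝ) / (Nat.factorial e : ℝ) = x / (Nat.factorial d : ℝ) := by
  have := cast_count_div (P := True) (by rwa [if_pos trivial]) x
  rwa [if_pos trivial] at this

lemma singleton_infix {b : Fin n} {τ : Word n} (h : b ∈ τ) : [b] <:+: τ := by
  obtain ⟨u, v, rfl⟩ := List.append_of_mem h
  exact ⟨u, v, by simp⟩

lemma ranking_ne_nil {B : Finset (Fin n)} {π : Word n} (hB : B ≠ ∅)
    (hπ : π.Nodup ∧ π.toFinset = B) : π ≠ [] := by
  intro h
  apply hB
  rw [← hπ.2, h]
  rfl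

end

/-- **Compatibility of synthesis with marginals on localization spaces.**
Let `A ⊆ [n]` with `|A| ≥ 2`, `B ∈ P̄(A)`, `F ∈ H_B`, and `A' ⊆ A` with `|A'| ≥ 2`.
If `B ⊆ A'` then `M_{A'}(φ_A F) = φ_{A'} F`; if `B ⊄ A'` then `M_{A'}(φ_A F) = 0`.
Moreover, if `B ≠ ∅` then `M_∅(φ_A F) = 0`. -/
theorem marg_synth_of_memH {n : ℕ} (hn : 2 ≤ n)
    (A : Finset (Fin n)) (hA : 2 ≤ A.card)
    (B : Finset (Fin n)) (hB : B ∈ Pbar A)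
    (F : Word n → ℝ) (hF : MemH B F)
    (A' : Finset (Fin n)) (hA'A : A' ⊆ A) (hA' : 2 ≤ A'.card) :
    (B ⊆ A' → marg A' (synth A F) = synth A' F) ∧
    (¬ B ⊆ A' → marg A' (synth A F) = 0) ∧
    (B ≠ ∅ → marg ∅ (synth A F) = 0) := by
  classical
  obtain ⟨hFL, hFm, hFs⟩ := hF
  have hBA : B ⊆ A := Finset.mem_powerset.1 (Finset.mem_filter.1 hB).1
  have hB2 : 2 ≤ B.card ∨ B = ∅ := (Finset.mem_filter.1 hB).2
  have hfacA : (Nat.factorial A.card : ℝ) ≠ 0 := Nat.cast_ne_zero.2 (Nat.factorial_ne_zero _)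
  have hfacA' : (Nat.factorial A'.card : ℝ) ≠ 0 := Nat.cast_ne_zero.2 (Nat.factorial_ne_zero _)
  have hcardU : ∀ (S C : Finset (Fin n)) (b : Fin n), C ⊆ S → b ∈ C →
      ((S \ C) ∪ {b}).card = S.card - C.card + 1 := by
    intro S C b hsub hbmem
    rw [Finset.card_union_of_disjoint (by
      simp only [Finset.disjoint_singleton_right, Finset.mem_sdiff, not_and, not_not]
      intro _; exact hbmem), Finset.card_sdiff_of_subset hsub, Finset.card_singleton]
  -- F [] = 0 when B ≠ ∅
  have hF0 : B ≠ ∅ → F [] = 0 := by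
    intro hne
    by_contra h
    exact hne (by rw [← (hFL [] h).2]; rfl)
  -- support restriction for synth A' F
  have hsynth : ∀ τ : Word n, IsRanking A' τ → B ≠ ∅ → synth A' F τ =
      ∑ π ∈ rankings n B, (if π <:+: τ then
        F π / (Nat.factorial (A'.card - π.length + 1) : ℝ) else 0) := by
    intro τ hτR hBne
    unfold synth
    rw [if_pos hτR, hF0 hBne, zero_div, zero_add]
    rw [← Finset.sum_subset (rankings_sub_allWords (A := B))]
    · apply Finset.sum_congr rfl
      intro π hπ
      have hπR := mem_rankings.1 hπ
      exact if_congr (and_iff_right (ranking_ne_nil hBne hπR)) rfl rfl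
    · intro π hπ hnot
      by_cases h : F π = 0
      · simp [h]
      · exact absurd (mem_rankings.2 ⟨(hFL π h).1, (hFL π h).2⟩) hnot
  refine ⟨?_, ?_, ?_⟩
  · -- B ⊆ A'
    intro hBsub
    funext τ
    by_cases hτR : IsRanking A' τ
    · rw [key hA'A hBA hτR hFL]
      rcases hB2 with hB2 | hBe
      · -- 2 ≤ B.card
        have hBne : B ≠ ∅ := by
          intro h
          rw [h] at hB2
          simp at hB2
        rw [hF0 hBne, zero_div, mul_zero, zero_add, hsynth τ hτR hBne]
        apply Finset.sum_congr rfl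
        intro π hπ
        have hπR := mem_rankings.1 hπ
        rw [if_pos (ranking_ne_nil hBne hπR)]
        obtain ⟨b, hbB⟩ := Finset.nonempty_iff_ne_empty.2 hBne
        have hbπ : b ∈ π := by rw [← List.mem_toFinset, hπR.2]; exact hbB
        have hm := master1 A A' B hA'A hBA ⟨hτR.1, hτR.2⟩ hπR hbπ (hBsub hbB)
        have hπfil : π.filter (fun a => decide (a ∈ A')) = π := by
          rw [List.filter_eq_self]
          intro a ha
          simpa using hBsub (by rw [← hπR.2]; exact List.mem_toFinset.2 ha)
        rw [hπfil] at hm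
        have hlenπ : π.length = B.card := len_of_ranking hπR.1 hπR.2
        have hc1 : ((A \ B) ∪ {b}).card = A.card - π.length + 1 := by
          rw [hcardU A B b hBA hbB, hlenπ]
        have hc2 : ((A' \ B) ∪ {b}).card = A'.card - π.length + 1 := by
          rw [hcardU A' B b hBsub hbB, hlenπ]
        rw [hc1, hc2] at hm
        exact cast_count_div hm (F π)
      · -- B = ∅
        subst hBe
        have hsum0 : (∑ π ∈ rankings n (∅ : Finset (Fin n)), (if π ≠ [] then
            F π * (((rankings n A).filter (fun σ =>
                σ.filter (fun a => decide (a ∈ A')) = τ ∧ π <:+: σ)).card : ℝ)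
              / (Nat.factorial (A.card - π.length + 1) : ℝ) else 0)) = 0 := by
          apply Finset.sum_eq_zero
          intro π hπ
          rw [if_neg (fun hne => hne ((List.toFinset_eq_empty_iff π).1 (mem_rankings.1 hπ).2))]
        rw [hsum0, add_zero]
        have hsv : synth A' F τ = F [] / (Nat.factorial A'.card : ℝ) := by
          unfold synth
          rw [if_pos hτR]
          have hz : (∑ π ∈ allWords n, (if π ≠ [] ∧ π <:+: τ then
              F π / (Nat.factorial (A'.card - π.length + 1) : ℝ) else 0)) = 0 := by
            apply Finset.sum_eq_zero
            intro π hπ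
            by_cases hπ0 : π = []
            · rw [if_neg (fun h => h.1 hπ0)]
            · have hFz : F π = 0 := by
                by_contra hc
                exact hπ0 ((List.toFinset_eq_empty_iff π).1 (hFL π hc).2)
              simp [hFz]
          rw [hz, add_zero]
        rw [hsv]
        have hdiv := cast_count_div' (c0 A A' hA'A ⟨hτR.1, hτR.2⟩) (F [])
        rw [← hdiv]
        ring
    · have h1 : marg A' (synth A F) τ = 0 := by unfold marg; rw [if_neg hτR]
      have h2 : synth A' F τ = 0 := by unfold synth; rw [if_neg hτR]
      rw [h1, h2]
  · -- ¬ B ⊆ A'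
    intro hBnsub
    funext τ
    by_cases hτR : IsRanking A' τ
    · have hBne : B ≠ ∅ := by rintro rfl; exact hBnsub (Finset.empty_subset A')
      have h2 : 2 ≤ B.card := by
        rcases hB2 with h | h
        · exact h
        · exact absurd h hBne
      show marg A' (synth A F) τ = 0
      rw [key hA'A hBA hτR hFL, hF0 hBne, zero_div, mul_zero, zero_add]
      by_cases hB'2 : 2 ≤ (B ∩ A').card
      · obtain ⟨b, hbB'⟩ := Finset.card_pos.1 (lt_of_lt_of_le (by norm_num) hB'2)
        have hbB : b ∈ B := (Finset.mem_inter.1 hbB').1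
        have hbA' : b ∈ A' := (Finset.mem_inter.1 hbB').2
        have hstep : ∀ π ∈ rankings n B, (if π ≠ [] then
            F π * (((rankings n A).filter (fun σ =>
                σ.filter (fun a => decide (a ∈ A')) = τ ∧ π <:+: σ)).card : ℝ)
              / (Nat.factorial (A.card - π.length + 1) : ℝ) else 0)
            = (if π.filter (fun a => decide (a ∈ B ∩ A')) <:+: τ then F π else 0)
              / (Nat.factorial ((A' \ B) ∪ {b}).card : ℝ) := by
          intro π hπ
          have hπR := mem_rankings.1 hπ
          rw [if_pos (ranking_ne_nil hBne hπR)]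
          have hbπ : b ∈ π := by rw [← List.mem_toFinset, hπR.2]; exact hbB
          have hm := master1 A A' B hA'A hBA ⟨hτR.1, hτR.2⟩ hπR hbπ hbA'
          have hfilB' : π.filter (fun a => decide (a ∈ A'))
              = π.filter (fun a => decide (a ∈ B ∩ A')) := by
            apply List.filter_congr
            intro a ha
            have haB : a ∈ B := by rw [← hπR.2]; exact List.mem_toFinset.2 ha
            simp only [decide_eq_decide, Finset.mem_inter]
            exact ⟨fun h => ⟨haB, h⟩, fun h => h.2⟩
          rw [hfilB'] at hm
          have hlenπ : π.length = B.card := len_of_ranking hπR.1 hπR.2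
          have hc1 : ((A \ B) ∪ {b}).card = A.card - π.length + 1 := by
            rw [hcardU A B b hBA hbB, hlenπ]
          rw [hc1] at hm
          have hterm := cast_count_div hm (F π)
          rw [hterm]
          by_cases hq : (π.filter (fun a => decide (a ∈ B ∩ A'))) <:+: τ
          · rw [if_pos hq, if_pos hq]
          · rw [if_neg hq, if_neg hq, zero_div]
        rw [Finset.sum_congr rfl hstep, ← Finset.sum_div]
        have hmaps : ∀ π ∈ rankings n B,
            π.filter (fun a => decide (a ∈ B ∩ A')) ∈ rankings n (B ∩ A') := by
          intro π hπ
          exact mem_rankings.2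
            (filter_ranking_mem Finset.inter_subset_left (mem_rankings.1 hπ))
        have hzero : (∑ π ∈ rankings n B,
            (if π.filter (fun a => decide (a ∈ B ∩ A')) <:+: τ then F π else 0)) = 0 := by
          rw [← Finset.sum_fiberwise_of_maps_to hmaps]
          apply Finset.sum_eq_zero
          intro ρ hρ
          have hρR := mem_rankings.1 hρ
          have hssub : B ∩ A' ⊂ B := by
            refine ⟨Finset.inter_subset_left, fun hsup => hBnsub ?_⟩
            intro a ha
            exact (Finset.mem_inter.1 (hsup ha)).2
          have hmarg0 : marg (B ∩ A') F ρ = 0 := by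
            rw [hFm (B ∩ A') hssub hB'2]
            rfl
          rw [marg_eq_fiber_sum Finset.inter_subset_left ⟨hρR.1, hρR.2⟩ hFL] at hmarg0
          have hcg : ∀ π ∈ (rankings n B).filter
              (fun π => π.filter (fun a => decide (a ∈ B ∩ A')) = ρ),
              (if π.filter (fun a => decide (a ∈ B ∩ A')) <:+: τ then F π else 0)
              = (if ρ <:+: τ then F π else 0) := by
            intro π hπ
            rw [(Finset.mem_filter.1 hπ).2]
          rw [Finset.sum_congr rfl hcg]
          by_cases hρτ : ρ <:+: τ
          · simp only [if_pos hρτ]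
            exact hmarg0
          · simp only [if_neg hρτ]
            exact Finset.sum_const_zero
        rw [hzero, zero_div]
      · -- |B ∩ A'| ≤ 1
        have hstep : ∀ π ∈ rankings n B, (if π ≠ [] then
            F π * (((rankings n A).filter (fun σ =>
                σ.filter (fun a => decide (a ∈ A')) = τ ∧ π <:+: σ)).card : ℝ)
              / (Nat.factorial (A.card - π.length + 1) : ℝ) else 0)
            = F π / (Nat.factorial A'.card : ℝ) := by
          intro π hπ
          have hπR := mem_rankings.1 hπ
          rw [if_pos (ranking_ne_nil hBne hπR)]
          have hlenπ : π.length = B.card := len_of_ranking hπR.1 hπR.2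
          by_cases hB'0 : B ∩ A' = ∅
          · obtain ⟨b, hbB⟩ := Finset.nonempty_iff_ne_empty.2 hBne
            have hbπ : b ∈ π := by rw [← List.mem_toFinset, hπR.2]; exact hbB
            have hdisj : ∀ a ∈ B, a ∉ A' := by
              intro a haB haA'
              have : a ∈ B ∩ A' := Finset.mem_inter.2 ⟨haB, haA'⟩
              rw [hB'0] at this
              exact absurd this (Finset.notMem_empty a)
            have hm := master0 A A' B hA'A hBA hdisj ⟨hτR.1, hτR.2⟩ hπR hbπ
            have hc1 : ((A \ B) ∪ {b}).card = A.card - π.length + 1 := by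
              rw [hcardU A B b hBA hbB, hlenπ]
            rw [hc1] at hm
            exact cast_count_div' hm (F π)
          · have hcard1 : (B ∩ A').card = 1 := by
              have h1 : 1 ≤ (B ∩ A').card :=
                Finset.card_pos.2 (Finset.nonempty_iff_ne_empty.2 hB'0)
              omega
            obtain ⟨b, hbeq⟩ := Finset.card_eq_one.1 hcard1
            have hbB' : b ∈ B ∩ A' := by rw [hbeq]; exact Finset.mem_singleton_self b
            have hbB : b ∈ B := (Finset.mem_inter.1 hbB').1
            have hbA' : b ∈ A' := (Finset.mem_inter.1 hbB').2
            have hbπ : b ∈ π := by rw [← List.mem_toFinset, hπR.2]; exact hbB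
            have hm := master1 A A' B hA'A hBA ⟨hτR.1, hτR.2⟩ hπR hbπ hbA'
            have hfil : π.filter (fun a => decide (a ∈ A')) = [b] := by
              have h1 : π.filter (fun a => decide (a ∈ A'))
                  = π.filter (fun a => decide (a = b)) := by
                apply List.filter_congr
                intro a ha
                have haB : a ∈ B := by rw [← hπR.2]; exact List.mem_toFinset.2 ha
                simp only [decide_eq_decide]
                constructor
                · intro h
                  have : a ∈ B ∩ A' := Finset.mem_inter.2 ⟨haB, h⟩
                  rw [hbeq] at this
                  exact Finset.mem_singleton.1 this
                · intro h
                  rw [h]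
                  exact hbA'
              rw [h1]
              exact filter_eq_single hπR.1 hbπ
            rw [hfil] at hm
            have hocc : [b] <:+: τ := by
              apply singleton_infix
              rw [← List.mem_toFinset, hτR.2]
              exact hbA'
            rw [if_pos hocc] at hm
            have hAeq : (A' \ B) ∪ {b} = A' := by
              ext a
              simp only [Finset.mem_union, Finset.mem_sdiff, Finset.mem_singleton]
              constructor
              · rintro (⟨h, _⟩ | h)
                · exact h
                · rw [h]; exact hbA'
              · intro h
                by_cases haB : a ∈ B
                · right
                  have : a ∈ B ∩ A' := Finset.mem_inter.2 ⟨haB, h⟩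
                  rw [hbeq] at this
                  exact Finset.mem_singleton.1 this
                · exact Or.inl ⟨h, haB⟩
            rw [hAeq] at hm
            have hc1 : ((A \ B) ∪ {b}).card = A.card - π.length + 1 := by
              rw [hcardU A B b hBA hbB, hlenπ]
            rw [hc1] at hm
            exact cast_count_div' hm (F π)
        rw [Finset.sum_congr rfl hstep, ← Finset.sum_div, hFs h2, zero_div]
    · have h1 : marg A' (synth A F) τ = 0 := by unfold marg; rw [if_neg hτR]
      rw [h1]; rfl
  · -- M ∅
    intro hBne
    funext w
    by_cases hw : IsRanking ∅ w
    · have hwnil : w = [] := (List.toFinset_eq_empty_iff w).1 hw.2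
      subst hwnil
      have h2 : 2 ≤ B.card := by
        rcases hB2 with h | h
        · exact h
        · exact absurd h hBne
      rw [show (0 : Word n → ℝ) [] = 0 from rfl]
      rw [key (Finset.empty_subset A) hBA ⟨List.nodup_nil, rfl⟩ hFL]
      rw [hF0 hBne, zero_div, mul_zero, zero_add]
      rw [← hFs h2]
      apply Finset.sum_congr rfl
      intro π hπ
      have hπR := mem_rankings.1 hπ
      rw [if_pos (ranking_ne_nil hBne hπR)]
      obtain ⟨b, hbB⟩ := Finset.nonempty_iff_ne_empty.2 hBne
      have hbπ : b ∈ π := by rw [← List.mem_toFinset, hπR.2]; exact hbB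
      have hm0 := master0 A ∅ B (Finset.empty_subset A) hBA (by simp)
        ⟨List.nodup_nil, rfl⟩ hπR hbπ
      rw [Finset.card_empty, Nat.factorial_zero, Nat.mul_one] at hm0
      have hcard : ((A \ B) ∪ {b}).card = A.card - π.length + 1 := by
        rw [Finset.card_union_of_disjoint (by
          simp only [Finset.disjoint_singleton_right, Finset.mem_sdiff, not_and, not_not]
          intro _; exact hbB), Finset.card_sdiff_of_subset hBA, Finset.card_singleton,
          len_of_ranking hπR.1 hπR.2]
      rw [hcard] at hm0
      rw [hm0]
      field_simp
    · have h1 : marg ∅ (synth A F) w = 0 := by unfold marg; rw [if_neg hw]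
      rw [h1]; rfl
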